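/- Let X be a compact metric space, {W_j}_{j=1}^N a finite open cover, δ a Lebesgue number for the cover, F_j = X \ W_j, and E_j = {x : d(x,F_j) ≥ δ/2}. Suppose M is a metric space, ι_M : M → Z and ι_X : X → Z are isometric embeddings into a common metric space Z with Hausdorff distance between their images less than δ' where δ' ≤ δ/8. Define U_j = {p ∈ M : d_Z(ι_M(p), ι_X(E_j)) < 2δ'}. If a point p ∈ M lies in U_{j_1}, ..., U_{j_m} for distinct indices j_1, ..., j_m, then there exists x ∈ X lying in W_{j_1}, ..., W_{j_m}. In particular, the multiplicity (order) of the cover {U_j} of M is at most the order of the cover {W_j} of X. -/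
import Mathlib


open Metric Set

/-- Let `X` be a compact metric space, `{W j}` a finite open cover with Lebesgue number `δ`,
`F j = X \ W j`, `E j = {x : d(x, F j) ≥ δ/2}`.  Let `M` be a metric space, and let
`ιM : M → Z`, `ιX : X → Z` be isometric embeddings into a common metric space `Z` whose images
have Hausdorff distance `< δ'`, where `0 < δ' ≤ δ/8`.  Put
`U j = {p ∈ M : d_Z(ιM p, ιX(E j)) < 2δ'}`.  If a point `p ∈ M` lies in `U j` for every `j` in
a finite set `S` of indices, then there is a point `x ∈ X` lying in `W j` for every `j ∈ S`.
In particular, if the order of the cover `{W j}` is at most `k`, then so is that of `{U j}`. -/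
theorem nerve_order_bound
    {X M Z : Type*} [MetricSpace X] [CompactSpace X] [MetricSpace M] [MetricSpace Z]
    {N : ℕ} (W : Fin N → Set X) (hopen : ∀ j, IsOpen (W j))
    (hcover : (⋃ j, W j) = Set.univ)
    (δ δ' : ℝ) (hδ : 0 < δ) (hδ' : 0 < δ') (hδ'δ : δ' ≤ δ / 8)
    (hLeb : ∀ x : X, ∃ j, Metric.ball x δ ⊆ W j)
    (F : Fin N → Set X) (hF : ∀ j, F j = (W j)ᶜ)
    (E : Fin N → Set X)
    (hE : ∀ j, E j = {x : X | ENNReal.ofReal (δ / 2) ≤ EMetric.infEdist x (F j)})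
    (ιM : M → Z) (ιX : X → Z) (hιM : Isometry ιM) (hιX : Isometry ιX)
    (hHaus : EMetric.hausdorffEdist (Set.range ιM) (Set.range ιX) < ENNReal.ofReal δ')
    (U : Fin N → Set M)
    (hU : ∀ j, U j = {p : M | EMetric.infEdist (ιM p) (ιX '' E j) < ENNReal.ofReal (2 * δ')}) :
    (∀ (p : M) (S : Finset (Fin N)), (∀ j ∈ S, p ∈ U j) → ∃ x : X, ∀ j ∈ S, x ∈ W j) ∧
      (∀ k : ℕ, (∀ (x : X) (S : Finset (Fin N)), (∀ j ∈ S, x ∈ W j) → S.card ≤ k) →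
        ∀ (p : M) (S : Finset (Fin N)), (∀ j ∈ S, p ∈ U j) → S.card ≤ k) := by

  have main : ∀ (p : M) (S : Finset (Fin N)), (∀ j ∈ S, p ∈ U j) → ∃ x : X, ∀ j ∈ S, x ∈ W j := by
    intro p S hp
    -- find x ∈ X close to p
    have h1 : EMetric.infEdist (ιM p) (Set.range ιX) < ENNReal.ofReal δ' :=
      lt_of_le_of_lt (EMetric.infEdist_le_hausdorffEdist_of_mem (Set.mem_range_self p)) hHaus
    obtain ⟨y, ⟨x, rfl⟩, hxy⟩ := EMetric.infEdist_lt_iff.mp h1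
    refine ⟨x, fun j hj => ?_⟩
    have hpj := hp j hj
    rw [hU j] at hpj
    obtain ⟨z, ⟨e, he, rfl⟩, hez⟩ := EMetric.infEdist_lt_iff.mp hpj
    have hxe : edist x e < ENNReal.ofReal (δ / 2) := by
      have : edist x e ≤ edist (ιX x) (ιM p) + edist (ιM p) (ιX e) := by
        rw [← hιX.edist_eq x e]
        exact edist_triangle _ _ _
      refine lt_of_le_of_lt this (lt_of_lt_of_le
        (ENNReal.add_lt_add (by rwa [edist_comm] at hxy) hez) ?_)
      rw [← ENNReal.ofReal_add hδ'.le (by linarith)]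
      exact ENNReal.ofReal_le_ofReal (by linarith)
    have heE : ENNReal.ofReal (δ / 2) ≤ EMetric.infEdist e (F j) := by
      have := hE j ▸ he
      exact this
    have hxF : x ∉ F j := by
      intro hxF
      have : EMetric.infEdist e (F j) ≤ edist e x := EMetric.infEdist_le_edist_of_mem hxF
      rw [edist_comm] at hxe
      exact absurd (lt_of_le_of_lt (le_trans heE this) hxe) (lt_irrefl _)
    rw [hF j] at hxF
    simpa using hxF
  exact ⟨main, fun k hk p S hp => by
    obtain ⟨x, hx⟩ := main p S hp
    exact hk x S hx⟩
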